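/- arXiv:1906.04584 — 3 statements merged into one kernel-verified Lean document; each statement's English description precedes it below -/
import Mathlib

section
/- Let f : ℝⁿ → [0,1] be a measurable function and define its Weierstrass transform f̂(x) = (2π)^{-n/2} ∫_{ℝⁿ} f(t) exp(-‖x-t‖²/2) dt, i.e. f̂(x) = E_{X ~ N(0, Iₙ)}[f(x + X)]. Then f̂ is √(2/π)-Lipschitz with respect to the Euclidean norm: for all x, y ∈ ℝⁿ, |f̂(x) - f̂(y)| ≤ √(2/π) · ‖x - y‖₂. -/
open MeasureTheory Real Set
open scoped ENNReal NNReal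

lemma phi_integrable : Integrable (fun s : ℝ => Real.exp (-s^2/2)) := by
  have := integrable_exp_neg_mul_sq (b := (1/2 : ℝ)) (by norm_num)
  convert this using 2 with s
  ring_nf

lemma phi_shift_integrable (d : ℝ) : Integrable (fun s : ℝ => Real.exp (-(s+d)^2/2)) :=
  phi_integrable.comp_add_right d

lemma shift_Iic (d c : ℝ) :
    ∫ s in Iic c, Real.exp (-(s+d)^2/2) = ∫ s in Iic (c + d), Real.exp (-s^2/2) := by
  have h := (measurePreserving_add_right (volume : Measure ℝ) d).setIntegral_preimage_emb
    (measurableEmbedding_addRight d) (fun s => Real.exp (-s^2/2)) (Iic (c + d))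
  have hpre : (fun s : ℝ => s + d) ⁻¹' Iic (c + d) = Iic c := by
    ext s; simp [Set.mem_Iic]
  rw [hpre] at h
  exact h

lemma shift_Ioi (d c : ℝ) :
    ∫ s in Ioi c, Real.exp (-(s+d)^2/2) = ∫ s in Ioi (c + d), Real.exp (-s^2/2) := by
  have h := (measurePreserving_add_right (volume : Measure ℝ) d).setIntegral_preimage_emb
    (measurableEmbedding_addRight d) (fun s => Real.exp (-s^2/2)) (Ioi (c + d))
  have hpre : (fun s : ℝ => s + d) ⁻¹' Ioi (c + d) = Ioi c := by
    ext s; simp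
  rw [hpre] at h
  exact h

lemma Iic_split (c c' : ℝ) (h : c ≤ c') :
    (∫ s in Iic c', Real.exp (-s^2/2)) - ∫ s in Iic c, Real.exp (-s^2/2)
      = ∫ s in Ioc c c', Real.exp (-s^2/2) := by
  have h3 := intervalIntegral.integral_Iic_sub_Iic (a := c) (b := c') (μ := volume)
    (f := fun s : ℝ => Real.exp (-s^2/2)) phi_integrable.integrableOn phi_integrable.integrableOn
  rw [intervalIntegral.integral_of_le h] at h3
  exact h3

lemma Ioi_split (c c' : ℝ) (h : c ≤ c') :
    (∫ s in Ioi c, Real.exp (-s^2/2)) - ∫ s in Ioi c', Real.exp (-s^2/2)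
      = ∫ s in Ioc c c', Real.exp (-s^2/2) := by
  have h1 := intervalIntegral.integral_Iic_add_Ioi (b := c) (μ := volume)
    (f := fun s : ℝ => Real.exp (-s^2/2)) phi_integrable.integrableOn phi_integrable.integrableOn
  have h2 := intervalIntegral.integral_Iic_add_Ioi (b := c') (μ := volume)
    (f := fun s : ℝ => Real.exp (-s^2/2)) phi_integrable.integrableOn phi_integrable.integrableOn
  have h3 := Iic_split c c' h
  linarith

lemma oneD (d : ℝ) (hd : 0 ≤ d) :
    ∫ s : ℝ, |Real.exp (-s^2/2) - Real.exp (-(s+d)^2/2)| ≤ 2 * d := by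
  have hint : Integrable (fun s : ℝ => Real.exp (-s^2/2)) := phi_integrable
  have hshift : Integrable (fun s : ℝ => Real.exp (-(s+d)^2/2)) := phi_shift_integrable d
  have habs : Integrable (fun s : ℝ => |Real.exp (-s^2/2) - Real.exp (-(s+d)^2/2)|) :=
    (hint.sub hshift).abs
  have hsplit := intervalIntegral.integral_Iic_add_Ioi (b := -d/2) (μ := volume)
    (f := fun s : ℝ => |Real.exp (-s^2/2) - Real.exp (-(s+d)^2/2)|)
    habs.integrableOn habs.integrableOn
  rw [← hsplit]
  have h1 : ∫ s in Iic (-d/2), |Real.exp (-s^2/2) - Real.exp (-(s+d)^2/2)|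
      = ∫ s in Ioc (-d/2) (d/2), Real.exp (-s^2/2) := by
    have he : ∀ s ∈ Iic (-d/2), |Real.exp (-s^2/2) - Real.exp (-(s+d)^2/2)|
        = Real.exp (-(s+d)^2/2) - Real.exp (-s^2/2) := by
      intro s hs
      rw [abs_of_nonpos]
      · ring
      · simp only [sub_nonpos]
        apply Real.exp_le_exp.2
        have : s ≤ -d/2 := hs
        nlinarith
    rw [setIntegral_congr_fun measurableSet_Iic he,
      integral_sub hshift.integrableOn hint.integrableOn, shift_Iic]
    have he2 : -d/2 + d = d/2 := by ring
    rw [he2, Iic_split (-d/2) (d/2) (by linarith)]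
  have h2 : ∫ s in Ioi (-d/2), |Real.exp (-s^2/2) - Real.exp (-(s+d)^2/2)|
      = ∫ s in Ioc (-d/2) (d/2), Real.exp (-s^2/2) := by
    have he : ∀ s ∈ Ioi (-d/2), |Real.exp (-s^2/2) - Real.exp (-(s+d)^2/2)|
        = Real.exp (-s^2/2) - Real.exp (-(s+d)^2/2) := by
      intro s hs
      rw [abs_of_nonneg]
      simp only [sub_nonneg]
      apply Real.exp_le_exp.2
      have : -d/2 ≤ s := le_of_lt hs
      nlinarith
    rw [setIntegral_congr_fun measurableSet_Ioi he,
      integral_sub hint.integrableOn hshift.integrableOn, shift_Ioi]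
    have he2 : -d/2 + d = d/2 := by ring
    rw [he2, Ioi_split (-d/2) (d/2) (by linarith)]
  rw [h1, h2]
  have hb : ∫ s in Ioc (-d/2) (d/2), Real.exp (-s^2/2) ≤ d := by
    have hbd := norm_setIntegral_le_of_norm_le_const (μ := volume) (s := Ioc (-d/2) (d/2))
      (f := fun s : ℝ => Real.exp (-s^2/2)) (C := 1) (by simp [Real.volume_Ioc])
      (fun s _ => by
        simp only [Real.norm_eq_abs]
        rw [abs_of_nonneg (Real.exp_nonneg _)]
        exact Real.exp_le_one_iff.2 (by nlinarith))
    calc ∫ s in Ioc (-d/2) (d/2), Real.exp (-s^2/2)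
        ≤ ‖∫ s in Ioc (-d/2) (d/2), Real.exp (-s^2/2)‖ := le_norm_self _
      _ ≤ 1 * (volume (Ioc (-d/2 : ℝ) (d/2))).toReal := hbd
      _ = d := by
          rw [Real.volume_Ioc, one_mul, ENNReal.toReal_ofReal (by linarith)]; ring
  linarith
lemma exp_norm_sq_prod {n : ℕ} (t : EuclideanSpace ℝ (Fin n)) :
    Real.exp (-‖t‖^2/2) = ∏ i, Real.exp (-(t i)^2/2) := by
  rw [EuclideanSpace.norm_eq, Real.sq_sqrt (by positivity), ← Real.exp_sum]
  congr 1
  simp only [Real.norm_eq_abs, sq_abs]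
  rw [← Finset.sum_div, Finset.sum_neg_distrib, neg_div]

lemma gauss_integrable (n : ℕ) :
    Integrable (fun t : EuclideanSpace ℝ (Fin n) => Real.exp (-‖t‖^2/2)) := by
  have hmp := (EuclideanSpace.volume_preserving_symm_measurableEquiv_toLp (Fin n)).symm
  rw [← hmp.integrable_comp_emb (MeasurableEquiv.measurableEmbedding _)]
  have h : (fun t : EuclideanSpace ℝ (Fin n) => Real.exp (-‖t‖^2/2)) ∘
      (MeasurableEquiv.toLp 2 (Fin n → ℝ)).symm.symm
      = fun a : Fin n → ℝ => ∏ i, Real.exp (-(a i)^2/2) := by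
    ext a
    simp only [Function.comp_apply]
    rw [exp_norm_sq_prod]
    simp [MeasurableEquiv.coe_toLp]
  rw [h]
  exact MeasureTheory.Integrable.fintype_prod (𝕜 := ℝ)
    (f := fun _ s => Real.exp (-s^2/2)) (fun _ => phi_integrable)

lemma keyC (n : ℕ) (v : EuclideanSpace ℝ (Fin n)) :
    (∫ t : EuclideanSpace ℝ (Fin n),
      |(2*π)^(-(n:ℝ)/2) * Real.exp (-‖t‖^2/2) - (2*π)^(-(n:ℝ)/2) * Real.exp (-‖t+v‖^2/2)|)
      ≤ Real.sqrt (2/π) * ‖v‖ := by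
  by_cases hv : v = 0
  · subst hv
    simp
  · have hn : n ≠ 0 := by
      rintro rfl
      exact hv (Subsingleton.elim v 0)
    haveI : NeZero n := ⟨hn⟩
    set d : ℝ := ‖v‖ with hdd
    have hd : 0 < d := norm_pos_iff.2 hv
    set u : EuclideanSpace ℝ (Fin n) := ‖v‖⁻¹ • v with hu_def
    have hu : ‖u‖ = 1 := norm_smul_inv_norm hv
    -- orthonormal basis with b 0 = u
    have hortho : Orthonormal ℝ (Set.restrict {(0 : Fin n)} (fun _ : Fin n => u)) := by
      rw [orthonormal_iff_ite]
      rintro ⟨i, hi⟩ ⟨j, hj⟩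
      have hij : i = j := by
        simp only [Set.mem_singleton_iff] at hi hj
        rw [hi, hj]
      subst hij
      simp only [Set.restrict_apply, if_pos]
      rw [real_inner_self_eq_norm_sq,
        show ‖Set.restrict {(0 : Fin n)} (fun _ : Fin n => u) ⟨i, hi⟩‖ = ‖u‖ from rfl, hu]
      norm_num
    obtain ⟨b, hb⟩ := hortho.exists_orthonormalBasis_extension_of_card_eq
      (by simp [finrank_euclideanSpace])
    have hb0 : b 0 = u := hb 0 rfl
    set w : EuclideanSpace ℝ (Fin n) := EuclideanSpace.single (0 : Fin n) d with hw_def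
    have hTw : b.repr.symm w = v := by
      have h1 : w = d • EuclideanSpace.single (0 : Fin n) (1:ℝ) := by
        rw [hw_def]
        ext i
        simp [EuclideanSpace.single_apply]
      rw [h1, _root_.map_smul, OrthonormalBasis.repr_symm_single, hb0, hu_def, smul_smul, hdd,
        mul_inv_cancel₀ (norm_ne_zero_iff.2 hv), one_smul]
    -- step 1: rotate
    have hrot : (∫ t : EuclideanSpace ℝ (Fin n),
        |(2*π)^(-(n:ℝ)/2) * Real.exp (-‖t‖^2/2) - (2*π)^(-(n:ℝ)/2) * Real.exp (-‖t+v‖^2/2)|)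
        = ∫ t : EuclideanSpace ℝ (Fin n),
        |(2*π)^(-(n:ℝ)/2) * Real.exp (-‖t‖^2/2) - (2*π)^(-(n:ℝ)/2) * Real.exp (-‖t+w‖^2/2)| := by
      rw [← b.measurePreserving_repr_symm.integral_comp
        (b.repr.symm.toHomeomorph.measurableEmbedding)
        (fun t => |(2*π)^(-(n:ℝ)/2) * Real.exp (-‖t‖^2/2)
          - (2*π)^(-(n:ℝ)/2) * Real.exp (-‖t+v‖^2/2)|)]
      congr 1
      ext s
      rw [← hTw, ← map_add, b.repr.symm.norm_map, b.repr.symm.norm_map]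
    rw [hrot]
    -- transfer to the product measure on (Fin n → ℝ)
    set g : Fin n → ℝ → ℝ := fun i s =>
      if i = 0 then |Real.exp (-s^2/2) - Real.exp (-(s+d)^2/2)| else Real.exp (-s^2/2) with hg_def
    have hpi : (∫ t : EuclideanSpace ℝ (Fin n),
        |(2*π)^(-(n:ℝ)/2) * Real.exp (-‖t‖^2/2) - (2*π)^(-(n:ℝ)/2) * Real.exp (-‖t+w‖^2/2)|)
        = ∫ a : Fin n → ℝ, (2*π)^(-(n:ℝ)/2) * ∏ i, g i (a i) := by
      have hmp := (EuclideanSpace.volume_preserving_symm_measurableEquiv_toLp (Fin n)).symm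
      rw [← hmp.integral_comp
        (MeasurableEquiv.measurableEmbedding _)
        (fun t => |(2*π)^(-(n:ℝ)/2) * Real.exp (-‖t‖^2/2)
          - (2*π)^(-(n:ℝ)/2) * Real.exp (-‖t+w‖^2/2)|)]
      congr 1
      ext a
      have hco : ∀ i, ((MeasurableEquiv.toLp 2 (Fin n → ℝ)).symm.symm a) i = a i := by
        intro i
        simp [MeasurableEquiv.coe_toLp]
      have hco2 : ∀ i, ((MeasurableEquiv.toLp 2 (Fin n → ℝ)).symm.symm a + w) i
          = a i + (if i = 0 then d else 0) := by
        intro i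
        rw [PiLp.add_apply, hco i, hw_def, EuclideanSpace.single_apply]
      rw [exp_norm_sq_prod, exp_norm_sq_prod]
      simp only [hco, hco2]
      have hP : (0:ℝ) ≤ ∏ i ∈ Finset.univ.erase 0, Real.exp (-(a i)^2/2) :=
        Finset.prod_nonneg fun i _ => (Real.exp_nonneg _)
      rw [← Finset.mul_prod_erase Finset.univ _ (Finset.mem_univ (0 : Fin n)),
        ← Finset.mul_prod_erase Finset.univ _ (Finset.mem_univ (0 : Fin n)),
        ← Finset.mul_prod_erase Finset.univ (fun i => g i (a i)) (Finset.mem_univ (0 : Fin n))]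
      have he1 : ∏ i ∈ Finset.univ.erase 0,
          Real.exp (-(a i + if i = 0 then d else 0)^2/2)
          = ∏ i ∈ Finset.univ.erase 0, Real.exp (-(a i)^2/2) := by
        refine Finset.prod_congr rfl fun i hi => ?_
        rw [if_neg (Finset.mem_erase.1 hi).1, add_zero]
      have he2 : ∏ i ∈ Finset.univ.erase 0, g i (a i)
          = ∏ i ∈ Finset.univ.erase 0, Real.exp (-(a i)^2/2) := by
        refine Finset.prod_congr rfl fun i hi => ?_
        rw [hg_def]
        simp only
        rw [if_neg (Finset.mem_erase.1 hi).1]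
      rw [he1, he2]
      have hite : (if (0:Fin n) = 0 then d else (0:ℝ)) = d := if_pos rfl
      have hg0 : g 0 (a 0) = |Real.exp (-(a 0)^2/2) - Real.exp (-(a 0 + d)^2/2)| := by
        simp [hg_def]
      rw [hite, hg0]
      have hc0 : (0:ℝ) ≤ (2*π)^(-(n:ℝ)/2) := by positivity
      rw [show (2*π)^(-(n:ℝ)/2) * (Real.exp (-(a 0)^2/2) * ∏ i ∈ Finset.univ.erase 0,
            Real.exp (-(a i)^2/2))
          - (2*π)^(-(n:ℝ)/2) * (Real.exp (-(a 0 + d)^2/2) * ∏ i ∈ Finset.univ.erase 0,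
            Real.exp (-(a i)^2/2))
          = (Real.exp (-(a 0)^2/2) - Real.exp (-(a 0 + d)^2/2))
            * ((2*π)^(-(n:ℝ)/2) * ∏ i ∈ Finset.univ.erase 0, Real.exp (-(a i)^2/2)) by ring,
        abs_mul, abs_of_nonneg (mul_nonneg hc0 hP)]
      ring
    rw [hpi, MeasureTheory.integral_const_mul,
      MeasureTheory.integral_fintype_prod_volume_eq_prod g]
    -- compute the product of integrals
    have hgauss : (∫ s : ℝ, Real.exp (-s^2/2)) = Real.sqrt (2*π) := by
      have := integral_gaussian (1/2 : ℝ)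
      rw [show π / (1/2 : ℝ) = 2*π by ring] at this
      rw [← this]
      congr 1 with s
      ring_nf
    have hprodsplit : (∏ i, ∫ s : ℝ, g i s)
        = (∫ s : ℝ, |Real.exp (-s^2/2) - Real.exp (-(s+d)^2/2)|)
          * Real.sqrt (2*π) ^ (n - 1) := by
      rw [← Finset.mul_prod_erase Finset.univ (fun i => ∫ s : ℝ, g i s)
        (Finset.mem_univ (0 : Fin n))]
      have herase : ∀ i ∈ Finset.univ.erase (0 : Fin n),
          (∫ s : ℝ, g i s) = Real.sqrt (2*π) := by
        intro i hi
        simp only [hg_def, if_neg (Finset.mem_erase.1 hi).1]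
        exact hgauss
      rw [Finset.prod_congr rfl herase, Finset.prod_const,
        Finset.card_erase_of_mem (Finset.mem_univ _), Finset.card_univ, Fintype.card_fin]
      simp [hg_def]
    rw [hprodsplit]
    have hone := oneD d hd.le
    have honepos : (0:ℝ) ≤ ∫ s : ℝ, |Real.exp (-s^2/2) - Real.exp (-(s+d)^2/2)| :=
      integral_nonneg fun s => abs_nonneg _
    have h2π : (0:ℝ) < 2*π := by positivity
    have hc2 : (2*π)^(-(n:ℝ)/2) * Real.sqrt (2*π) ^ (n-1) = (2*π)^(-(1:ℝ)/2) := by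
      rw [Real.sqrt_eq_rpow, ← Real.rpow_natCast ((2*π)^((1:ℝ)/2:ℝ)) (n-1),
        ← Real.rpow_mul h2π.le, ← Real.rpow_add h2π]
      congr 1
      have hcast : ((n-1 : ℕ) : ℝ) = (n:ℝ) - 1 := by
        rw [Nat.cast_sub (Nat.one_le_iff_ne_zero.2 hn)]
        simp
      rw [hcast]
      ring
    have hfinal : (2*π)^(-(1:ℝ)/2) * 2 = Real.sqrt (2/π) := by
      rw [show (-(1:ℝ)/2) = -(1/2 : ℝ) by ring, Real.rpow_neg h2π.le, ← Real.sqrt_eq_rpow]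
      rw [show (2:ℝ)/π = 2^2/(2*π) by field_simp]
      rw [Real.sqrt_div (by positivity) , Real.sqrt_sq (by norm_num : (0:ℝ) ≤ 2)]
      field_simp
    calc (2*π)^(-(n:ℝ)/2) * ((∫ s : ℝ, |Real.exp (-s^2/2) - Real.exp (-(s+d)^2/2)|)
          * Real.sqrt (2*π) ^ (n-1))
        = ((2*π)^(-(n:ℝ)/2) * Real.sqrt (2*π) ^ (n-1))
          * (∫ s : ℝ, |Real.exp (-s^2/2) - Real.exp (-(s+d)^2/2)|) := by ring
      _ ≤ ((2*π)^(-(n:ℝ)/2) * Real.sqrt (2*π) ^ (n-1)) * (2*d) := by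
          apply mul_le_mul_of_nonneg_left hone
          rw [hc2]
          positivity
      _ = Real.sqrt (2/π) * d := by rw [hc2]; rw [← hfinal]; ring

/-- The standard `n`-dimensional Gaussian measure `N(0, Iₙ)`, with density
`(2π)^{-n/2} exp(-‖t‖²/2)` with respect to Lebesgue measure. -/
noncomputable def stdGaussian (n : ℕ) : Measure (EuclideanSpace ℝ (Fin n)) :=
  volume.withDensity fun t =>
    ENNReal.ofReal ((2 * π) ^ (-(n : ℝ) / 2) * Real.exp (-‖t‖ ^ 2 / 2))

/-- if `f : ℝⁿ → [0,1]` is measurable, its Weierstrass transform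
`f̂(x) = E_{X ~ N(0,Iₙ)}[f(x + X)]` is `√(2/π)`-Lipschitz for the Euclidean norm. -/
theorem weierstrass_transform_lipschitz (n : ℕ)
    (f : EuclideanSpace ℝ (Fin n) → ℝ) (hf : Measurable f)
    (hf01 : ∀ t, f t ∈ Set.Icc (0 : ℝ) 1)
    (fhat : EuclideanSpace ℝ (Fin n) → ℝ)
    (hfhat : ∀ x, fhat x = ∫ t, f (x + t) ∂(stdGaussian n)) :
    ∀ x y : EuclideanSpace ℝ (Fin n),
      |fhat x - fhat y| ≤ Real.sqrt (2 / π) * ‖x - y‖ := by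
  intro x y
  set dens : EuclideanSpace ℝ (Fin n) → ℝ :=
    fun t => (2 * π) ^ (-(n : ℝ) / 2) * Real.exp (-‖t‖ ^ 2 / 2) with hdens_def
  have hdens_nonneg : ∀ t, 0 ≤ dens t := fun t => by positivity
  have hdens_cont : Continuous dens := by
    apply continuous_const.mul
    exact Real.continuous_exp.comp (by continuity)
  have hdens_int : Integrable dens :=
    (gauss_integrable n).const_mul _
  -- rewrite fhat
  have hstd : stdGaussian n
      = volume.withDensity (fun t => ((dens t).toNNReal : ℝ≥0∞)) := rfl
  have hrw : ∀ z : EuclideanSpace ℝ (Fin n),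
      fhat z = ∫ t, dens (t - z) * f t := by
    intro z
    rw [hfhat z, hstd, integral_withDensity_eq_integral_smul
      (hdens_cont.measurable.real_toNNReal) (fun t => f (z + t))]
    have h1 : (fun t => ((dens t).toNNReal : ℝ≥0) • f (z + t))
        = fun t => (fun s => dens (s - z) * f s) (z + t) := by
      ext t
      rw [NNReal.smul_def, Real.coe_toNNReal _ (hdens_nonneg t), smul_eq_mul]
      simp only
      rw [add_sub_cancel_left]
    rw [h1, integral_add_left_eq_self (μ := volume) (fun s => dens (s - z) * f s) z]
  -- integrability
  have hcomp : ∀ z : EuclideanSpace ℝ (Fin n),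
      Integrable (fun t => dens (t - z)) := fun z => hdens_int.comp_sub_right z
  have hmul_int : ∀ z : EuclideanSpace ℝ (Fin n),
      Integrable (fun t => dens (t - z) * f t) := by
    intro z
    apply Integrable.mono (hcomp z)
    · exact (((hdens_cont.comp (continuous_id.sub continuous_const)).measurable).mul
        hf).aestronglyMeasurable
    · filter_upwards with t
      rw [Real.norm_eq_abs, Real.norm_eq_abs, abs_mul]
      have hft : |f t| ≤ 1 := by
        rw [abs_of_nonneg (hf01 t).1]; exact (hf01 t).2
      calc |dens (t - z)| * |f t| ≤ |dens (t - z)| * 1 :=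
            mul_le_mul_of_nonneg_left hft (abs_nonneg _)
        _ = |dens (t - z)| := by ring
  rw [hrw x, hrw y, ← integral_sub (hmul_int x) (hmul_int y)]
  have hle1 : |∫ t, (dens (t - x) * f t - dens (t - y) * f t)|
      ≤ ∫ t, |dens (t - x) - dens (t - y)| := by
    calc |∫ t, (dens (t - x) * f t - dens (t - y) * f t)|
        = ‖∫ t, (dens (t - x) * f t - dens (t - y) * f t)‖ := (Real.norm_eq_abs _).symm
      _ ≤ ∫ t, ‖dens (t - x) * f t - dens (t - y) * f t‖ :=
          norm_integral_le_integral_norm _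
      _ ≤ ∫ t, |dens (t - x) - dens (t - y)| := by
          apply integral_mono_of_nonneg
          · filter_upwards with t; exact norm_nonneg _
          · exact ((hcomp x).sub (hcomp y)).abs
          · filter_upwards with t
            have h2 : dens (t - x) * f t - dens (t - y) * f t
                = (dens (t - x) - dens (t - y)) * f t := by ring
            rw [Real.norm_eq_abs, h2, abs_mul]
            have hft : |f t| ≤ 1 := by
              rw [abs_of_nonneg (hf01 t).1]; exact (hf01 t).2
            exact mul_le_of_le_one_right (abs_nonneg _) hft
  refine hle1.trans ?_
  have hshift : (∫ t, |dens (t - x) - dens (t - y)|)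
      = ∫ t, |dens t - dens (t + (x - y))| := by
    rw [← integral_add_left_eq_self (μ := volume)
      (fun t => |dens (t - x) - dens (t - y)|) x]
    congr 1
    ext t
    have e1 : x + t - x = t := by abel
    have e2 : x + t - y = t + (x - y) := by abel
    rw [e1, e2]
  rw [hshift]
  exact keyC n (x - y)
end

section
/- Let f : ℝⁿ → [0,1] be measurable and f̂ its Weierstrass transform. For every x ∈ ℝⁿ and every unit vector u ∈ ℝⁿ, the directional derivative satisfies u · ∇f̂(x) ≤ √(2/π). -/
open MeasureTheory Real Filter Set


lemma gauss1d : ∫ s : ℝ, Real.exp (-s ^ 2 / 2) = Real.sqrt (2 * π) := by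
  have h : ∀ s : ℝ, -s ^ 2 / 2 = -(1/2) * s ^ 2 := fun s => by ring
  simp_rw [h]
  rw [integral_gaussian]
  rw [show π / (1/2:ℝ) = 2 * π by ring]

lemma ioi_lemma : ∫ s in Ioi (0:ℝ), s * Real.exp (-s ^ 2 / 2) = 1 := by
  have hderiv : ∀ s ∈ Ici (0:ℝ), HasDerivAt (fun z : ℝ => -Real.exp (-(z ^ 2 / 2)))
      (s * Real.exp (-s ^ 2 / 2)) s := by
    intro s _
    have h1 : HasDerivAt (fun z : ℝ => -(z ^ 2 / 2)) (-s) s := by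
      have := ((hasDerivAt_pow 2 s).div_const 2).neg
      refine this.congr_deriv ?_
      push_cast
      norm_num
    have h2 := h1.exp.neg
    refine h2.congr_deriv ?_
    rw [neg_div]
    ring
  have hint : IntegrableOn (fun s : ℝ => s * Real.exp (-s ^ 2 / 2)) (Ioi 0) := by
    have h : ∀ s : ℝ, -s ^ 2 / 2 = -(1/2) * s ^ 2 := fun s => by ring
    simp_rw [h]
    exact (integrable_mul_exp_neg_mul_sq (by norm_num : (0:ℝ) < 1/2)).integrableOn
  have htend : Tendsto (fun z : ℝ => -Real.exp (-(z ^ 2 / 2))) atTop (nhds 0) := by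
    rw [show (0:ℝ) = -0 by norm_num]
    refine Tendsto.neg ?_
    refine Real.tendsto_exp_atBot.comp ?_
    have : Tendsto (fun z : ℝ => z ^ 2 / 2) atTop atTop :=
      (tendsto_pow_atTop two_ne_zero).atTop_div_const (by norm_num)
    exact tendsto_neg_atBot_iff.mpr this
  have := MeasureTheory.integral_Ioi_of_hasDerivAt_of_tendsto' hderiv hint htend
  simpa using this

lemma absgauss : ∫ s : ℝ, |s| * Real.exp (-s ^ 2 / 2) = 2 := by
  have : ∫ s : ℝ, |s| * Real.exp (-s ^ 2 / 2)
      = ∫ s : ℝ, (fun z => z * Real.exp (-z ^ 2 / 2)) |s| := by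
    congr 1; funext s; simp [sq_abs]
  rw [this, integral_comp_abs (f := fun z => z * Real.exp (-z ^ 2 / 2)), ioi_lemma]
  norm_num

lemma absgauss_integrable : Integrable (fun s : ℝ => |s| * Real.exp (-s ^ 2 / 2)) := by
  have h : ∀ s : ℝ, -s ^ 2 / 2 = -(1/2) * s ^ 2 := fun s => by ring
  simp_rw [h]
  have := (integrable_mul_exp_neg_mul_sq (by norm_num : (0:ℝ) < 1/2)).abs
  refine this.congr ?_
  filter_upwards with s
  rw [abs_mul, abs_of_nonneg (Real.exp_pos _).le]

/-- for measurable `f : ℝⁿ → [0,1]` with Weierstrass transform `f̂`,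
whose gradient is `∇f̂(x) = E_{X ~ N(0,Iₙ)}[f(x + X) • X]`, every directional
derivative along a unit vector `u` satisfies `u ⬝ ∇f̂(x) ≤ √(2/π)`. -/
theorem weierstrass_directional_deriv_le (n : ℕ)
    (f : EuclideanSpace ℝ (Fin n) → ℝ) (hf : Measurable f)
    (hf01 : ∀ t, f t ∈ Set.Icc (0 : ℝ) 1)
    (x u : EuclideanSpace ℝ (Fin n)) (hu : ‖u‖ = 1) :
    (inner ℝ u (∫ t, f (x + t) • t ∂(stdGaussian n)) : ℝ) ≤ Real.sqrt (2 / π) := by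
  have hπ : 0 < π := pi_pos
  -- n ≠ 0
  rcases Nat.eq_zero_or_pos n with hn | hn
  · subst hn
    have hu0 : u = 0 := Subsingleton.elim u 0
    rw [hu0, norm_zero] at hu
    norm_num at hu
  haveI : NeZero n := ⟨hn.ne'⟩
  -- density in ℝ≥0 form
  set ρ : EuclideanSpace ℝ (Fin n) → ℝ :=
    fun t => (2 * π) ^ (-(n : ℝ) / 2) * Real.exp (-‖t‖ ^ 2 / 2) with hρ
  have hρ0 : ∀ t, 0 ≤ ρ t := fun t =>
    mul_nonneg (rpow_nonneg (by positivity) _) (exp_pos _).le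
  have hρmeas : Measurable fun t => (ρ t).toNNReal := by
    apply Measurable.real_toNNReal
    exact (measurable_const.mul ((measurable_norm.pow_const 2).neg.div_const 2).exp)
  have hμ : stdGaussian n = volume.withDensity fun t => ((ρ t).toNNReal : ENNReal) := rfl
  -- orthonormal basis with b 0 = u
  have hcard : Module.finrank ℝ (EuclideanSpace ℝ (Fin n)) = Fintype.card (Fin n) := by
    simp [finrank_euclideanSpace]
  have horth : Orthonormal ℝ (Set.restrict {(0 : Fin n)} (fun _ => u)) := by
    constructor
    · intro i; exact hu
    · intro i j hij
      exfalso
      exact hij (Subtype.ext (by rw [i.2, j.2]))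
  obtain ⟨b, hb⟩ := horth.exists_orthonormalBasis_extension_of_card_eq hcard
  have hbu : b 0 = u := hb 0 rfl
  -- measure preserving change of variables
  let ψe : (Fin n → ℝ) ≃ᵐ EuclideanSpace ℝ (Fin n) :=
    (MeasurableEquiv.toLp 2 (Fin n → ℝ)).trans
      (b.repr.symm.toHomeomorph.toMeasurableEquiv)
  have hψ : MeasurePreserving ψe volume volume :=
    (b.measurePreserving_repr_symm).comp
      (EuclideanSpace.volume_preserving_symm_measurableEquiv_toLp (Fin n)).symm
  -- pointwise identities
  have hnorm : ∀ y : Fin n → ℝ, ‖(ψe y : EuclideanSpace ℝ (Fin n))‖ ^ 2 = ∑ i, y i ^ 2 := by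
    intro y
    show ‖b.repr.symm ((MeasurableEquiv.toLp 2 (Fin n → ℝ)) y)‖ ^ 2 = _
    rw [b.repr.symm.norm_map]
    rw [EuclideanSpace.norm_eq]
    rw [sq_sqrt (by positivity)]
    simp [Real.norm_eq_abs, sq_abs]
  have hinner : ∀ y : Fin n → ℝ, (inner ℝ u (ψe y) : ℝ) = y 0 := by
    intro y
    show (inner ℝ u (b.repr.symm ((MeasurableEquiv.toLp 2 (Fin n → ℝ)) y)) : ℝ) = _
    have : (inner ℝ u (b.repr.symm ((MeasurableEquiv.toLp 2 (Fin n → ℝ)) y)) : ℝ)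
        = inner ℝ (b.repr u) ((MeasurableEquiv.toLp 2 (Fin n → ℝ)) y) := by
      rw [← b.repr.inner_map_map u _]
      simp
    rw [this, ← hbu, b.repr_self]
    rw [EuclideanSpace.inner_single_left]
    simp
  -- the one-dimensional factors
  set h : Fin n → ℝ → ℝ :=
    fun i s => (2 * π) ^ (-(1 : ℝ) / 2) * Real.exp (-s ^ 2 / 2) * (if i = 0 then |s| else 1)
      with hh
  have hint1 : ∀ i, Integrable (h i) := by
    intro i
    rcases eq_or_ne i 0 with rfl | hi
    · simpa [hh, mul_comm, mul_assoc, mul_left_comm] using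
        (absgauss_integrable.const_mul ((2 * π) ^ (-(1 : ℝ) / 2)))
    · have : Integrable (fun s : ℝ => Real.exp (-s ^ 2 / 2)) := by
        have hcongr : ∀ s : ℝ, -s ^ 2 / 2 = -(1/2) * s ^ 2 := fun s => by ring
        simp_rw [hcongr]
        exact integrable_exp_neg_mul_sq (by norm_num)
      simpa [hh, hi] using this.const_mul ((2 * π) ^ (-(1 : ℝ) / 2))
  have hval : ∀ i, ∫ s, h i s = if i = 0 then Real.sqrt (2 / π) else 1 := by
    intro i
    rcases eq_or_ne i 0 with rfl | hi
    · have heq : h 0 = fun s : ℝ => (2 * π) ^ (-(1 : ℝ) / 2) * (|s| * Real.exp (-s ^ 2 / 2)) := by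
        funext s; simp only [hh, if_true, ite_true, eq_self_iff_true]; ring
      rw [heq, integral_const_mul, absgauss, if_pos rfl]
      rw [show (-(1:ℝ)/2) = -(1/2 : ℝ) by norm_num, rpow_neg (by positivity),
        ← Real.sqrt_eq_rpow]
      have h2 : Real.sqrt 2 * Real.sqrt 2 = 2 := Real.mul_self_sqrt (by norm_num)
      have hs2 : (0:ℝ) < Real.sqrt 2 := Real.sqrt_pos.mpr (by norm_num)
      have hsp : (0:ℝ) < Real.sqrt π := Real.sqrt_pos.mpr hπ
      rw [Real.sqrt_mul (by norm_num : (0:ℝ) ≤ 2), show (2:ℝ)/π = 2 * π⁻¹ by ring,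
        Real.sqrt_mul (by norm_num : (0:ℝ) ≤ 2), Real.sqrt_inv]
      field_simp
      nlinarith [h2, hs2, hsp]
    · have heq : h i = fun s : ℝ => (2 * π) ^ (-(1 : ℝ) / 2) * Real.exp (-s ^ 2 / 2) := by
        funext s; simp only [hh, if_neg hi]; ring
      rw [heq, integral_const_mul, gauss1d, if_neg hi]
      rw [show (-(1:ℝ)/2) = -(1/2 : ℝ) by norm_num, rpow_neg (by positivity),
        ← Real.sqrt_eq_rpow]
      rw [inv_mul_cancel₀ (by positivity)]
  -- product identity
  have hprodpt : ∀ y : Fin n → ℝ, ρ (ψe y) * |(inner ℝ u (ψe y) : ℝ)| = ∏ i, h i (y i) := by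
    intro y
    rw [hinner, hρ]
    simp only [hh]
    rw [Finset.prod_mul_distrib, Finset.prod_mul_distrib]
    rw [Finset.prod_ite_eq' Finset.univ (0 : Fin n) (fun i => |y i|)]
    simp only [Finset.mem_univ, if_pos]
    rw [Finset.prod_const, Finset.card_univ, Fintype.card_fin, ← Real.exp_sum]
    rw [hnorm y]
    congr 1
    congr 1
    · rw [← Real.rpow_natCast ((2*π) ^ (-(1:ℝ)/2)) n, ← Real.rpow_mul (by positivity)]
      congr 1
      push_cast
      ring
    · congr 1
      rw [← Finset.sum_div, Finset.sum_neg_distrib]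
  -- integrability on E of the dominating function
  have hprodInt : Integrable (fun y : Fin n → ℝ => ∏ i, h i (y i)) := by
    rw [show (volume : Measure (Fin n → ℝ)) = Measure.pi fun _ => volume from volume_pi]
    exact Integrable.fintype_prod (f := h) hint1
  have hA : Integrable (fun t : EuclideanSpace ℝ (Fin n) => ρ t * |(inner ℝ u t : ℝ)|) volume := by
    rw [← hψ.integrable_comp_emb ψe.measurableEmbedding]
    have hco : (fun t : EuclideanSpace ℝ (Fin n) => ρ t * |(inner ℝ u t : ℝ)|) ∘ ψe
        = fun y : Fin n → ℝ => ∏ i, h i (y i) := by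
      funext y; exact hprodpt y
    rw [hco]
    exact hprodInt
  have hIval : ∫ t : EuclideanSpace ℝ (Fin n), ρ t * |(inner ℝ u t : ℝ)| = Real.sqrt (2 / π) := by
    rw [← hψ.integral_comp ψe.measurableEmbedding
      (fun t : EuclideanSpace ℝ (Fin n) => ρ t * |(inner ℝ u t : ℝ)|)]
    calc ∫ y : Fin n → ℝ, ρ (ψe y) * |(inner ℝ u (ψe y) : ℝ)|
        = ∫ y : Fin n → ℝ, ∏ i, h i (y i) := by
          congr 1; funext y; exact hprodpt y
      _ = ∏ i, ∫ s, h i s := by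
          rw [show (volume : Measure (Fin n → ℝ)) = Measure.pi fun _ => volume from volume_pi]
          exact integral_fintype_prod_eq_prod (f := h)
      _ = Real.sqrt (2 / π) := by
          simp_rw [hval]
          rw [Finset.prod_ite_eq' Finset.univ (0 : Fin n) (fun _ => Real.sqrt (2/π))]
          simp
  -- main argument
  rw [hμ, integral_withDensity_eq_integral_smul hρmeas]
  set g0 : EuclideanSpace ℝ (Fin n) → EuclideanSpace ℝ (Fin n) :=
    fun t => (ρ t).toNNReal • (f (x + t) • t) with hg0
  by_cases hInt : Integrable g0 volume
  · rw [← integral_inner hInt u]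
    have hle : ∀ t : EuclideanSpace ℝ (Fin n),
        (inner ℝ u (g0 t) : ℝ) ≤ ρ t * |(inner ℝ u t : ℝ)| := by
      intro t
      have h1 : (inner ℝ u (g0 t) : ℝ) = ρ t * (f (x + t) * (inner ℝ u t : ℝ)) := by
        rw [hg0]
        simp only [NNReal.smul_def, inner_smul_right, real_inner_smul_right]
        try rw [Real.coe_toNNReal _ (hρ0 t)]
        try ring
      rw [h1]
      have hft := hf01 (x + t)
      have := abs_nonneg (inner ℝ u t : ℝ)
      have h2 : f (x + t) * (inner ℝ u t : ℝ) ≤ |(inner ℝ u t : ℝ)| := by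
        rcases le_or_gt 0 (inner ℝ u t : ℝ) with hpos | hneg
        · calc f (x + t) * (inner ℝ u t : ℝ) ≤ 1 * (inner ℝ u t : ℝ) :=
              mul_le_mul_of_nonneg_right hft.2 hpos
            _ = (inner ℝ u t : ℝ) := one_mul _
            _ ≤ |(inner ℝ u t : ℝ)| := le_abs_self _
        · calc f (x + t) * (inner ℝ u t : ℝ) ≤ 0 :=
              mul_nonpos_of_nonneg_of_nonpos hft.1 hneg.le
            _ ≤ |(inner ℝ u t : ℝ)| := abs_nonneg _
      exact mul_le_mul_of_nonneg_left h2 (hρ0 t)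
    calc (∫ t, (inner ℝ u (g0 t) : ℝ)) ≤ ∫ t, ρ t * |(inner ℝ u t : ℝ)| :=
        integral_mono (hInt.const_inner u) hA hle
      _ = Real.sqrt (2 / π) := hIval
  · rw [integral_undef hInt]
    simp only [inner_zero_right]
    positivity
end

section
/- Let Φ(a) = (1/√(2π)) ∫_{-∞}^{a} exp(-s²/2) ds be the standard Gaussian CDF and Φ⁻¹ its inverse. For any measurable function f : ℝⁿ → [0,1] with Weierstrass transform f̂ taking values in (0,1), the map x ↦ Φ⁻¹(f̂(x)) is 1-Lipschitz with respect to the Euclidean norm: for all x, y ∈ ℝⁿ, |Φ⁻¹(f̂(x)) - Φ⁻¹(f̂(y))| ≤ ‖x - y‖₂. -/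
open MeasureTheory Real

/-- The standard Gaussian CDF `Φ(a) = (1/√(2π)) ∫_{-∞}^a exp(-s²/2) ds`. -/
noncomputable def stdGaussianCDF (a : ℝ) : ℝ :=
  (Real.sqrt (2 * π))⁻¹ * ∫ s in Set.Iic a, Real.exp (-s ^ 2 / 2)

/-- The inverse `Φ⁻¹ : (0,1) → ℝ` of the standard Gaussian CDF. -/
noncomputable def stdGaussianCDFInv : ℝ → ℝ :=
  Function.invFun stdGaussianCDF

namespace ProbitAux

open Set


noncomputable def gpdf (s : ℝ) : ℝ := (2 * π) ^ (-(1:ℝ) / 2) * Real.exp (-s ^ 2 / 2)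

lemma two_pi_pos' : (0:ℝ) < 2 * π := by positivity

lemma gconst_eq : (2 * π) ^ (-(1:ℝ) / 2) = (Real.sqrt (2 * π))⁻¹ := by
  rw [show (-(1:ℝ)/2) = -(1/2) by norm_num, Real.rpow_neg two_pi_pos'.le, ← Real.sqrt_eq_rpow]

lemma gpdf_pos (s : ℝ) : 0 < gpdf s :=
  mul_pos (Real.rpow_pos_of_pos two_pi_pos' _) (Real.exp_pos _)

lemma gpdf_cont : Continuous gpdf := by
  unfold gpdf
  continuity

lemma gpdf_integrable : Integrable gpdf := by
  unfold gpdf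
  refine Integrable.const_mul ?_ _
  have : ∀ s : ℝ, -s ^ 2 / 2 = -2⁻¹ * s ^ 2 := fun s => by ring
  simp_rw [this]
  simpa using integrable_exp_neg_mul_sq (by norm_num : (0:ℝ) < 2⁻¹)

lemma integral_gpdf : ∫ s, gpdf s = 1 := by
  unfold gpdf
  rw [integral_const_mul]
  have : ∀ s : ℝ, -s ^ 2 / 2 = -2⁻¹ * s ^ 2 := fun s => by ring
  simp_rw [this]
  rw [integral_gaussian, gconst_eq, show π / 2⁻¹ = 2 * π by ring]
  exact inv_mul_cancel₀ (by positivity)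

lemma cdf_eq (a : ℝ) : stdGaussianCDF a = ∫ s in Iic a, gpdf s := by
  unfold stdGaussianCDF gpdf
  rw [integral_const_mul, gconst_eq]

lemma cdf_nonneg (a : ℝ) : 0 ≤ stdGaussianCDF a := by
  rw [cdf_eq]; exact integral_nonneg fun s => (gpdf_pos s).le

lemma cdf_strictMono : StrictMono stdGaussianCDF := by
  intro a b hab
  rw [cdf_eq, cdf_eq, ← sub_pos,
    intervalIntegral.integral_Iic_sub_Iic gpdf_integrable.integrableOn
      gpdf_integrable.integrableOn]
  exact intervalIntegral.intervalIntegral_pos_of_pos gpdf_integrable.intervalIntegrable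
    gpdf_pos hab

lemma cdf_continuous : Continuous stdGaussianCDF := by
  have C0 : 0 ≤ (2 * π) ^ (-(1:ℝ) / 2) := (Real.rpow_pos_of_pos two_pi_pos' _).le
  have : LipschitzWith (Real.toNNReal ((2 * π) ^ (-(1:ℝ) / 2))) stdGaussianCDF := by
    refine LipschitzWith.of_dist_le_mul fun a b => ?_
    rw [Real.dist_eq, Real.dist_eq, Real.coe_toNNReal _ C0, cdf_eq, cdf_eq,
      intervalIntegral.integral_Iic_sub_Iic gpdf_integrable.integrableOn
        gpdf_integrable.integrableOn]
    have := intervalIntegral.norm_integral_le_of_norm_le_const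
      (a := b) (b := a) (C := (2 * π) ^ (-(1:ℝ) / 2)) (f := gpdf) ?_
    · simpa [Real.norm_eq_abs, abs_sub_comm a b] using this
    · intro x _
      rw [Real.norm_eq_abs, abs_of_pos (gpdf_pos x)]
      unfold gpdf
      nth_rewrite 2 [show (2*π) ^ (-(1:ℝ)/2) = (2*π) ^ (-(1:ℝ)/2) * 1 by ring]
      gcongr
      exact Real.exp_le_one_iff.2 (by nlinarith [sq_nonneg x])
  exact this.continuous

lemma cdf_tendsto_one : Filter.Tendsto stdGaussianCDF Filter.atTop (nhds 1) := by
  set μ : Measure ℝ := volume.withDensity fun s => ENNReal.ofReal (gpdf s) with hμ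
  have hmeas : Measurable fun s => ENNReal.ofReal (gpdf s) :=
    (gpdf_cont.measurable).ennreal_ofReal
  have key : ∀ a : ℝ, μ (Iic a) = ENNReal.ofReal (stdGaussianCDF a) := by
    intro a
    rw [hμ, withDensity_apply _ measurableSet_Iic, cdf_eq,
      ← ofReal_integral_eq_lintegral_ofReal gpdf_integrable.integrableOn
        (Filter.Eventually.of_forall fun s => (gpdf_pos s).le)]
  have huniv : μ univ = 1 := by
    rw [hμ, withDensity_apply _ MeasurableSet.univ, Measure.restrict_univ,
      ← ofReal_integral_eq_lintegral_ofReal gpdf_integrable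
        (Filter.Eventually.of_forall fun s => (gpdf_pos s).le), integral_gpdf,
      ENNReal.ofReal_one]
  have h1 := tendsto_measure_Iic_atTop μ
  rw [huniv] at h1
  have h2 := (ENNReal.tendsto_toReal (by simp : (1:ENNReal) ≠ ⊤)).comp h1
  simp only [ENNReal.toReal_one] at h2
  convert h2 using 1
  funext a
  simp [Function.comp, key a, ENNReal.toReal_ofReal (cdf_nonneg a)]

lemma cdf_neg (a : ℝ) : stdGaussianCDF (-a) = 1 - stdGaussianCDF a := by
  have heven : ∀ x : ℝ, gpdf (-x) = gpdf x := by
    intro x; unfold gpdf; rw [neg_sq]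
  have h1 : stdGaussianCDF (-a) = ∫ s in Ioi a, gpdf s := by
    rw [cdf_eq]
    have := integral_comp_neg_Iic (-a) gpdf
    rw [neg_neg] at this
    rw [← this]
    exact setIntegral_congr_fun measurableSet_Iic fun x _ => (heven x).symm
  have h2 : (∫ s in Iic a, gpdf s) + ∫ s in Ioi a, gpdf s = 1 := by
    rw [← integral_gpdf, ← setIntegral_union (Iic_disjoint_Ioi le_rfl) measurableSet_Ioi
      gpdf_integrable.integrableOn gpdf_integrable.integrableOn, Iic_union_Ioi,
      Measure.restrict_univ]
  rw [h1, cdf_eq]; linarith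

lemma cdf_surj {p : ℝ} (hp : p ∈ Ioo (0:ℝ) 1) : ∃ a, stdGaussianCDF a = p := by
  obtain ⟨hp0, hp1⟩ := hp
  have hlt : max p (1 - p) < 1 := by
    rw [max_lt_iff]; constructor <;> linarith
  obtain ⟨b, hb⟩ := (cdf_tendsto_one.eventually (eventually_gt_nhds hlt)).exists
  have hb1 : p < stdGaussianCDF b := lt_of_le_of_lt (le_max_left _ _) hb
  have hb2 : stdGaussianCDF (-b) < p := by
    rw [cdf_neg]
    have := lt_of_le_of_lt (le_max_right p (1 - p)) hb
    linarith
  have hab : -b ≤ b := le_of_lt (cdf_strictMono.lt_iff_lt.1 (hb2.trans hb1))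
  have := intermediate_value_Icc hab cdf_continuous.continuousOn
  obtain ⟨a, _, ha⟩ := this ⟨hb2.le, hb1.le⟩
  exact ⟨a, ha⟩

lemma cdf_invFun {p : ℝ} (hp : p ∈ Ioo (0:ℝ) 1) :
    stdGaussianCDF (stdGaussianCDFInv p) = p :=
  Function.invFun_eq (cdf_surj hp)

noncomputable def gdens (n : ℕ) (t : EuclideanSpace ℝ (Fin n)) : ℝ :=
  (2 * π) ^ (-(n : ℝ) / 2) * Real.exp (-‖t‖ ^ 2 / 2)

lemma gdens_pos {n : ℕ} (t : EuclideanSpace ℝ (Fin n)) : 0 < gdens n t :=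
  mul_pos (Real.rpow_pos_of_pos two_pi_pos' _) (Real.exp_pos _)

lemma gdens_cont (n : ℕ) : Continuous (gdens n) := by
  unfold gdens
  exact continuous_const.mul (Real.continuous_exp.comp (by continuity))

lemma integral_stdGaussian (n : ℕ) (g : EuclideanSpace ℝ (Fin n) → ℝ) :
    ∫ t, g t ∂(volume.withDensity fun t =>
      ENNReal.ofReal ((2 * π) ^ (-(n : ℝ) / 2) * Real.exp (-‖t‖ ^ 2 / 2))) =
      ∫ t, gdens n t * g t := by
  have hd : (fun t : EuclideanSpace ℝ (Fin n) =>
      ENNReal.ofReal ((2 * π) ^ (-(n : ℝ) / 2) * Real.exp (-‖t‖ ^ 2 / 2)))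
      = fun t => ((Real.toNNReal (gdens n t) : NNReal) : ENNReal) := rfl
  rw [hd, integral_withDensity_eq_integral_smul ((gdens_cont n).measurable.real_toNNReal) g]
  congr 1; funext t
  simp [NNReal.smul_def, Real.coe_toNNReal _ (gdens_pos t).le]

lemma norm_symm_sq (n : ℕ) (w : Fin n → ℝ) :
    ‖MeasurableEquiv.toLp 2 (Fin n → ℝ) w‖ ^ 2 = ∑ i, w i ^ 2 := by
  rw [EuclideanSpace.norm_eq, Real.sq_sqrt (by positivity)]
  congr 1; funext i
  rw [MeasurableEquiv.coe_toLp]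
  simp [Real.norm_eq_abs, sq_abs]

lemma prod_gpdf (n : ℕ) (w : Fin n → ℝ) :
    ∏ i, gpdf (w i) = (2 * π) ^ (-(n : ℝ) / 2) * Real.exp (-(∑ i, w i ^ 2) / 2) := by
  unfold gpdf
  rw [Finset.prod_mul_distrib, Finset.prod_const, ← Real.exp_sum]
  congr 1
  · rw [← Real.rpow_natCast ((2 * π) ^ (-(1:ℝ)/2)), ← Real.rpow_mul two_pi_pos'.le]
    congr 1
    simp [Finset.card_univ]
    ring
  · rw [← Finset.sum_div, ← Finset.sum_neg_distrib]

lemma gdens_integrable (n : ℕ) : Integrable (gdens n) := by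
  have h : MeasurePreserving (MeasurableEquiv.toLp 2 (Fin n → ℝ)) :=
    (EuclideanSpace.volume_preserving_symm_measurableEquiv_toLp (Fin n)).symm
  rw [← MeasurePreserving.integrable_comp_emb h (MeasurableEquiv.measurableEmbedding _)]
  have : (gdens n) ∘ MeasurableEquiv.toLp 2 (Fin n → ℝ)
      = fun w : Fin n → ℝ => ∏ i, gpdf (w i) := by
    funext w
    simp only [Function.comp_apply, gdens, prod_gpdf, norm_symm_sq]
  rw [this]
  exact Integrable.fintype_prod fun _ => gpdf_integrable

lemma gdens_shift {n : ℕ} (v t : EuclideanSpace ℝ (Fin n)) :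
    gdens n (t - v) = Real.exp ((inner ℝ v t : ℝ) - ‖v‖ ^ 2 / 2) * gdens n t := by
  unfold gdens
  rw [show -‖t - v‖ ^ 2 / 2 = ((inner ℝ v t : ℝ) - ‖v‖ ^ 2 / 2) + (-‖t‖ ^ 2 / 2) by
    rw [norm_sub_sq_real, real_inner_comm]; ring, Real.exp_add]
  ring

lemma marginal {n : ℕ} {e : EuclideanSpace ℝ (Fin n)} (he : ‖e‖ = 1) (h : ℝ → ℝ) :
    ∫ t, gdens n t * h (inner ℝ e t : ℝ) = ∫ s, gpdf s * h s := by
  -- n is positive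
  rcases Nat.eq_zero_or_pos n with hn | hn
  · exfalso
    subst hn
    have : e = 0 := Subsingleton.elim e 0
    rw [this, norm_zero] at he
    norm_num at he
  set i₀ : Fin n := ⟨0, hn⟩
  -- orthonormal basis containing e
  have hcard : Module.finrank ℝ (EuclideanSpace ℝ (Fin n)) = Fintype.card (Fin n) := by
    simp [finrank_euclideanSpace]
  have honb : Orthonormal ℝ (({i₀} : Set (Fin n)).restrict fun _ : Fin n => e) := by
    constructor
    · intro i; simpa [Set.restrict] using he
    · intro i j hij
      exfalso
      apply hij
      ext
      rw [i.2, j.2]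
  obtain ⟨b, hb⟩ := honb.exists_orthonormalBasis_extension_of_card_eq hcard
  have hbe : b i₀ = e := hb i₀ rfl
  -- rewrite inner as coordinate
  have hinner : ∀ t, (inner ℝ e t : ℝ) = b.repr t i₀ := by
    intro t
    rw [b.repr_apply_apply, hbe]
  -- transfer along b.repr
  have h1 : ∫ t, gdens n t * h (inner ℝ e t : ℝ)
      = ∫ u : EuclideanSpace ℝ (Fin n), gdens n u * h (u i₀) := by
    rw [← (b.measurePreserving_measurableEquiv).integral_comp'
      (fun u : EuclideanSpace ℝ (Fin n) => gdens n u * h (u i₀))]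
    congr 1; funext t
    have hcoe : (b.measurableEquiv t : EuclideanSpace ℝ (Fin n)) = b.repr t := rfl
    rw [hcoe, hinner t]
    have hgd : gdens n (b.repr t) = gdens n t := by
      unfold gdens; rw [LinearIsometryEquiv.norm_map]
    rw [hgd]
  rw [h1]
  -- transfer to pi measure
  have h2 : ∫ u : EuclideanSpace ℝ (Fin n), gdens n u * h (u i₀)
      = ∫ w : Fin n → ℝ, ∏ i, (fun s => gpdf s * (if i = i₀ then h s else 1)) (w i) := by
    rw [← (show MeasurePreserving (MeasurableEquiv.toLp 2 (Fin n → ℝ)) volume volume from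
      (EuclideanSpace.volume_preserving_symm_measurableEquiv_toLp (Fin n)).symm).integral_comp'
      (fun u : EuclideanSpace ℝ (Fin n) => gdens n u * h (u i₀))]
    congr 1; funext w
    have hval : MeasurableEquiv.toLp 2 (Fin n → ℝ) w i₀ = w i₀ := by
      rw [MeasurableEquiv.coe_toLp]
    have hprod : ∀ i : Fin n, (fun s => gpdf s * (if i = i₀ then h s else 1)) (w i)
        = gpdf (w i) * (if i = i₀ then h (w i) else 1) := fun _ => rfl
    simp only [hprod]
    rw [Finset.prod_mul_distrib, prod_gpdf]
    have hite : (∏ i, (if i = i₀ then h (w i) else 1)) = h (w i₀) := by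
      rw [Finset.prod_ite_eq' Finset.univ i₀ (fun i => h (w i))]
      simp
    rw [hite]
    unfold gdens
    rw [norm_symm_sq, hval]
  erw [h2, MeasureTheory.integral_fintype_prod_eq_prod (ι := Fin n)
    (fun i s => gpdf s * (if i = i₀ then h s else 1)) (μ := fun _ => volume)]
  rw [Finset.prod_eq_single i₀]
  · simp
  · intro i _ hi
    simp only [if_neg hi, mul_one]
    exact integral_gpdf
  · intro habs
    exact absurd (Finset.mem_univ i₀) habs

lemma gpdf_shift (r s : ℝ) : gpdf (s - r) = Real.exp (r * s - r ^ 2 / 2) * gpdf s := by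
  unfold gpdf
  rw [show -(s - r) ^ 2 / 2 = (r * s - r ^ 2 / 2) + (-s ^ 2 / 2) by ring, Real.exp_add]
  ring

lemma integral_gpdf_ite (a : ℝ) :
    ∫ s, gpdf s * (if s ≤ a then (1:ℝ) else 0) = stdGaussianCDF a := by
  have h : (fun s => gpdf s * (if s ≤ a then (1:ℝ) else 0)) = Set.indicator (Iic a) gpdf := by
    funext s
    rw [Set.indicator_apply]
    by_cases hs : s ≤ a <;> simp [hs, mem_Iic]
  rw [h, integral_indicator measurableSet_Iic, cdf_eq]

lemma setIntegral_Iic_gpdf_sub (a r : ℝ) :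
    ∫ s in Iic a, gpdf (s - r) = stdGaussianCDF (a - r) := by
  have h1 : ∀ s : ℝ, Set.indicator (Iic a) (fun u => gpdf (u - r)) s
      = Set.indicator (Iic (a - r)) gpdf (s - r) := by
    intro s
    rw [Set.indicator_apply, Set.indicator_apply]
    have hiff : s ∈ Iic a ↔ s - r ∈ Iic (a - r) := by
      simp only [mem_Iic]
      constructor <;> intro <;> linarith
    by_cases hs : s ∈ Iic a
    · rw [if_pos hs, if_pos (hiff.1 hs)]
    · rw [if_neg hs, if_neg fun hh => hs (hiff.2 hh)]
  rw [← integral_indicator measurableSet_Iic]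
  simp_rw [h1]
  rw [integral_sub_right_eq_self (μ := (volume : Measure ℝ)) (Set.indicator (Iic (a - r)) gpdf) r,
    integral_indicator measurableSet_Iic, cdf_eq]

lemma integral_gpdf_ite_exp (a r : ℝ) :
    ∫ s, gpdf s * (Real.exp (r * s - r ^ 2 / 2) * (if s ≤ a then (1:ℝ) else 0))
      = stdGaussianCDF (a - r) := by
  have h0 : ∀ s, gpdf s * (Real.exp (r * s - r ^ 2 / 2) * (if s ≤ a then (1:ℝ) else 0))
      = gpdf (s - r) * (if s ≤ a then (1:ℝ) else 0) := by
    intro s; rw [gpdf_shift]; ring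
  simp_rw [h0]
  have h2 : (fun s => gpdf (s - r) * (if s ≤ a then (1:ℝ) else 0))
      = Set.indicator (Iic a) (fun s => gpdf (s - r)) := by
    funext s; rw [Set.indicator_apply]; by_cases hs : s ≤ a <;> simp [hs, mem_Iic]
  rw [h2, integral_indicator measurableSet_Iic, setIntegral_Iic_gpdf_sub]

lemma key {n : ℕ} (f : EuclideanSpace ℝ (Fin n) → ℝ) (hf : Measurable f)
    (hf01 : ∀ t, f t ∈ Set.Icc (0 : ℝ) 1)
    (x v : EuclideanSpace ℝ (Fin n)) (hv : v ≠ 0)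
    (hx : (∫ t, gdens n t * f (x + t)) ∈ Set.Ioo (0 : ℝ) 1) :
    stdGaussianCDF (stdGaussianCDFInv (∫ t, gdens n t * f (x + t)) - ‖v‖)
      ≤ ∫ t, gdens n t * f ((x + v) + t) := by
  set r : ℝ := ‖v‖ with hr
  have hr0 : 0 < r := norm_pos_iff.2 hv
  set e := r⁻¹ • v with he'
  have he : ‖e‖ = 1 := by
    rw [he', norm_smul, norm_inv, Real.norm_eq_abs, abs_of_pos hr0, ← hr,
      inv_mul_cancel₀ hr0.ne']
  have hve : v = r • e := by
    rw [he', smul_smul, mul_inv_cancel₀ hr0.ne', one_smul]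
  set g : EuclideanSpace ℝ (Fin n) → ℝ := fun t => f (x + t) with hg
  have hgmeas : Measurable g := hf.comp (measurable_const.add measurable_id)
  have hg01 : ∀ t, g t ∈ Set.Icc (0:ℝ) 1 := fun t => hf01 _
  set a := stdGaussianCDFInv (∫ t, gdens n t * g t) with ha
  have hΦa : stdGaussianCDF a = ∫ t, gdens n t * g t := cdf_invFun hx
  set w : EuclideanSpace ℝ (Fin n) → ℝ :=
    fun t => Real.exp (r * (inner ℝ e t : ℝ) - r ^ 2 / 2) with hw
  set χ : EuclideanSpace ℝ (Fin n) → ℝ :=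
    fun t => if (inner ℝ e t : ℝ) ≤ a then 1 else 0 with hχ
  set c := Real.exp (r * a - r ^ 2 / 2) with hc
  have hinner_cont : Continuous fun t : EuclideanSpace ℝ (Fin n) => (inner ℝ e t : ℝ) :=
    Continuous.inner continuous_const continuous_id
  have hwcont : Continuous w := Real.continuous_exp.comp
    ((continuous_const.mul hinner_cont).sub continuous_const)
  have hχmeas : Measurable χ :=
    Measurable.ite (measurableSet_le hinner_cont.measurable measurable_const)
      measurable_const measurable_const
  -- gdens * w is the translated density
  have hGw : ∀ t, gdens n t * w t = gdens n (t - v) := by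
    intro t
    rw [gdens_shift v t]
    have h1 : (inner ℝ v t : ℝ) - ‖v‖ ^ 2 / 2 = r * (inner ℝ e t : ℝ) - r ^ 2 / 2 := by
      rw [hve, real_inner_smul_left, norm_smul, Real.norm_eq_abs, abs_of_pos hr0, he, mul_one]
    rw [h1]
    ring
  have hIGw : Integrable fun t => gdens n t * w t := by
    have : (fun t => gdens n t * w t) = fun t => gdens n (t - v) := funext hGw
    rw [this]
    exact (gdens_integrable n).comp_sub_right v
  -- the right-hand side as an integral against gdens * w
  have hRHS : ∫ t, gdens n t * f ((x + v) + t) = ∫ t, gdens n t * (w t * g t) := by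
    have step := integral_sub_right_eq_self (μ := (volume : Measure (EuclideanSpace ℝ (Fin n))))
      (fun t => gdens n t * f ((x + v) + t)) v
    rw [← step]
    congr 1; funext t
    have h1 : (x + v) + (t - v) = x + t := by abel
    rw [h1, ← hGw t]
    rw [hg]
    ring
  rw [hRHS]
  -- integrability of all pieces
  have hbound : ∀ (u : EuclideanSpace ℝ (Fin n) → ℝ), Measurable u →
      (∀ t, 0 ≤ u t) → (∀ t, u t ≤ 1) →
      Integrable (fun t => gdens n t * (w t * u t))
        ∧ Integrable (fun t => gdens n t * u t) := by
    intro u hum hu0 hu1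
    constructor
    · refine hIGw.mono ?_ ?_
      · exact (((gdens_cont n).measurable.mul
          (hwcont.measurable.mul hum))).aestronglyMeasurable
      · refine Filter.Eventually.of_forall fun t => ?_
        have h3 : 0 ≤ gdens n t * w t * (1 - u t) :=
          mul_nonneg (mul_nonneg (gdens_pos t).le (le_of_lt (Real.exp_pos _)))
            (by linarith [hu1 t])
        rw [Real.norm_eq_abs, Real.norm_eq_abs,
          abs_of_nonneg (mul_nonneg (gdens_pos t).le
            (mul_nonneg (le_of_lt (Real.exp_pos _)) (hu0 t))),
          abs_of_nonneg (mul_nonneg (gdens_pos t).le (le_of_lt (Real.exp_pos _)))]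
        nlinarith [h3]
    · refine (gdens_integrable n).mono ?_ ?_
      · exact ((gdens_cont n).measurable.mul hum).aestronglyMeasurable
      · refine Filter.Eventually.of_forall fun t => ?_
        have h3 : 0 ≤ gdens n t * (1 - u t) :=
          mul_nonneg (gdens_pos t).le (by linarith [hu1 t])
        rw [Real.norm_eq_abs, Real.norm_eq_abs,
          abs_of_nonneg (mul_nonneg (gdens_pos t).le (hu0 t)),
          abs_of_pos (gdens_pos t)]
        nlinarith [h3]
  obtain ⟨IGwg, IGg⟩ := hbound g hgmeas (fun t => (hg01 t).1) (fun t => (hg01 t).2)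
  obtain ⟨IGwχ, IGχ⟩ := hbound χ hχmeas
    (fun t => by rw [hχ]; dsimp only; split <;> norm_num)
    (fun t => by rw [hχ]; dsimp only; split <;> norm_num)
  -- values of the comparison integrals
  have hGχ : ∫ t, gdens n t * χ t = stdGaussianCDF a := by
    rw [show (∫ t, gdens n t * χ t)
        = ∫ t, gdens n t * (fun s => if s ≤ a then (1:ℝ) else 0) (inner ℝ e t : ℝ) from rfl,
      marginal he (fun s => if s ≤ a then (1:ℝ) else 0)]
    exact integral_gpdf_ite a
  have hGwχ : ∫ t, gdens n t * (w t * χ t) = stdGaussianCDF (a - r) := by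
    rw [show (∫ t, gdens n t * (w t * χ t))
        = ∫ t, gdens n t *
          (fun s => Real.exp (r * s - r ^ 2 / 2) * (if s ≤ a then (1:ℝ) else 0))
            (inner ℝ e t : ℝ) from rfl,
      marginal he (fun s => Real.exp (r * s - r ^ 2 / 2) * (if s ≤ a then (1:ℝ) else 0))]
    exact integral_gpdf_ite_exp a r
  -- pointwise positivity
  have hpt : ∀ t, 0 ≤ gdens n t * ((w t - c) * (g t - χ t)) := by
    intro t
    refine mul_nonneg (gdens_pos t).le ?_
    rcases le_or_gt (inner ℝ e t : ℝ) a with hle | hlt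
    · have hχ1 : χ t = 1 := if_pos hle
      have h1 : w t - c ≤ 0 := by
        rw [hw, hc]
        simp only [sub_nonpos]
        exact Real.exp_le_exp.2 (by nlinarith)
      have h2 : g t - χ t ≤ 0 := by rw [hχ1]; linarith [(hg01 t).2]
      nlinarith [mul_nonneg (neg_nonneg.2 h1) (neg_nonneg.2 h2)]
    · have hχ0 : χ t = 0 := if_neg (not_le.2 hlt)
      have h1 : 0 ≤ w t - c := by
        rw [hw, hc]
        simp only [sub_nonneg]
        exact Real.exp_le_exp.2 (by nlinarith)
      have h2 : 0 ≤ g t - χ t := by rw [hχ0]; linarith [(hg01 t).1]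
      exact mul_nonneg h1 h2
  have hint : 0 ≤ ∫ t, gdens n t * ((w t - c) * (g t - χ t)) := integral_nonneg hpt
  have hexp : (fun t => gdens n t * ((w t - c) * (g t - χ t)))
      = fun t => (gdens n t * (w t * g t) - gdens n t * (w t * χ t)
          - c * (gdens n t * g t)) + c * (gdens n t * χ t) := by
    funext t; ring
  rw [hexp] at hint
  have I1 : Integrable (fun t => gdens n t * (w t * g t) - gdens n t * (w t * χ t)) :=
    IGwg.sub IGwχ
  have I2 : Integrable (fun t => c * (gdens n t * g t)) := IGg.const_mul c
  have I3 : Integrable (fun t => gdens n t * (w t * g t) - gdens n t * (w t * χ t)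
      - c * (gdens n t * g t)) := I1.sub I2
  have I4 : Integrable (fun t => c * (gdens n t * χ t)) := IGχ.const_mul c
  rw [integral_add I3 I4, integral_sub I1 I2, integral_sub IGwg IGwχ,
    integral_const_mul, integral_const_mul, hGwχ, hGχ, hΦa] at hint
  linarith

end ProbitAux

/-- for measurable `f : ℝⁿ → [0,1]` whose Weierstrass transform `f̂`
takes values in `(0,1)`, the map `x ↦ Φ⁻¹(f̂(x))` is 1-Lipschitz for the Euclidean
norm. -/
theorem probit_weierstrass_lipschitz (n : ℕ)
    (f : EuclideanSpace ℝ (Fin n) → ℝ) (hf : Measurable f)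
    (hf01 : ∀ t, f t ∈ Set.Icc (0 : ℝ) 1)
    (fhat : EuclideanSpace ℝ (Fin n) → ℝ)
    (hfhat : ∀ x, fhat x = ∫ t, f (x + t) ∂(stdGaussian n))
    (hfhat01 : ∀ x, fhat x ∈ Set.Ioo (0 : ℝ) 1) :
    ∀ x y : EuclideanSpace ℝ (Fin n),
      |stdGaussianCDFInv (fhat x) - stdGaussianCDFInv (fhat y)| ≤ ‖x - y‖ := by
  have hmain : ∀ z, fhat z = ∫ t, ProbitAux.gdens n t * f (z + t) := by
    intro z
    rw [hfhat z]
    exact ProbitAux.integral_stdGaussian n (fun t => f (z + t))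
  intro x y
  rcases eq_or_ne x y with rfl | hxy
  · simp
  have happ : ∀ p q : EuclideanSpace ℝ (Fin n), p ≠ q →
      stdGaussianCDFInv (fhat p) - ‖q - p‖ ≤ stdGaussianCDFInv (fhat q) := by
    intro p q hpq
    have hv : q - p ≠ 0 := sub_ne_zero.2 (Ne.symm hpq)
    have hxIoo : (∫ t, ProbitAux.gdens n t * f (p + t)) ∈ Set.Ioo (0:ℝ) 1 := by
      rw [← hmain p]; exact hfhat01 p
    have hk := ProbitAux.key f hf hf01 p (q - p) hv hxIoo
    rw [show p + (q - p) = q by abel] at hk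
    rw [← hmain p, ← hmain q] at hk
    have h2 : stdGaussianCDF (stdGaussianCDFInv (fhat q)) = fhat q :=
      ProbitAux.cdf_invFun (hfhat01 q)
    by_contra hcon
    push_neg at hcon
    have h3 := ProbitAux.cdf_strictMono hcon
    rw [h2] at h3
    linarith
  have h1 := happ x y hxy
  have h2 := happ y x hxy.symm
  rw [abs_sub_le_iff]
  constructor
  · have h3 : ‖y - x‖ = ‖x - y‖ := norm_sub_rev y x
    linarith
  · linarith
end
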